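/- Let ψ : X → Y be a map of smooth complex varieties of the same dimension, quasifinite, and let x ∈ X be a point where the scheme-theoretic fibre of ψ through x has length exactly 2 at x (ramification index 2). Then the Jacobian determinant of ψ, cutting out the ramification divisor R, is part of a minimal generating set of the maximal ideal at x; in particular R is smooth at x. -/

import Mathlib

set_option maxHeartbeats 1600000


open IsLocalRing

/-- Local-ring formulation of: for a quasifinite map `ψ : X → Y` of smooth complex varieties
of the same dimension `n` and a point `x ∈ X` where the scheme-theoretic fibre has length
exactly `2` (ramification index 2), the Jacobian determinant of `ψ` — the determinant of the
induced map `ψ*Ω_Y → Ω_X` of free modules, cutting out the ramification divisor `R` — is part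
of a minimal generating set of the maximal ideal at `x`, i.e. it lies in `m_x` but not in
`m_x²`; in particular `R` is smooth at `x`.

Here `B = O_{Y,y}` and `A = O_{X,x}` are regular local ℂ-algebras of dimension `n`
(regularity: the maximal ideal is generated by `n` elements), `algebraMap B A` is a local
homomorphism, the modules of Kähler differentials are free with bases `bB`, `bA`, and the
fibre condition is `dim_ℂ (A / m_B·A) = 2`. -/
theorem stmt15 (n : ℕ) (A B : Type) [CommRing A] [CommRing B]
    [IsLocalRing A] [IsLocalRing B] [IsNoetherianRing A] [IsNoetherianRing B]
    [Algebra ℂ A] [Algebra ℂ B] [Algebra B A] [IsScalarTower ℂ B A]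
    [SMulCommClass ℂ B A] [IsLocalHom (algebraMap B A)]
    (hdimA : ringKrullDim A = n) (hdimB : ringKrullDim B = n)
    (hregA : ∃ s : Finset A, s.card = n ∧ Ideal.span (s : Set A) = maximalIdeal A)
    (hregB : ∃ s : Finset B, s.card = n ∧ Ideal.span (s : Set B) = maximalIdeal B)
    (h2 : Module.finrank ℂ (A ⧸ Ideal.map (algebraMap B A) (maximalIdeal B)) = 2)
    (bB : Module.Basis (Fin n) B (Ω[B⁄ℂ])) (bA : Module.Basis (Fin n) A (Ω[A⁄ℂ])) :
    (Matrix.of fun i j : Fin n =>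
        bA.repr (KaehlerDifferential.map ℂ ℂ B A (bB j)) i).det ∈ maximalIdeal A ∧
    (Matrix.of fun i j : Fin n =>
        bA.repr (KaehlerDifferential.map ℂ ℂ B A (bB j)) i).det ∉ maximalIdeal A ^ 2 := by
  classical
  set I : Ideal A := Ideal.map (algebraMap B A) (maximalIdeal B) with hI
  set m : Ideal A := maximalIdeal A with hm
  -- I ≤ m
  have hIm : I ≤ m := by
    rw [hI, Ideal.map_le_iff_le_comap]
    intro b hb
    simp only [Ideal.mem_comap, hm, IsLocalRing.mem_maximalIdeal, mem_nonunits_iff] at *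
    exact fun h => hb (IsLocalHom.map_nonunit b h)
  -- the residue field
  haveI hmmax : m.IsMaximal := IsLocalRing.maximalIdeal.isMaximal A
  letI : Field (A ⧸ m) := Ideal.Quotient.field m
  haveI : FiniteDimensional ℂ (A ⧸ I) := FiniteDimensional.of_finrank_eq_succ (n := 1) h2
  have halg : ∀ c : ℂ, algebraMap ℂ (A ⧸ I) c = Ideal.Quotient.mk I (algebraMap ℂ A c) := by
    intro c; rw [IsScalarTower.algebraMap_apply ℂ A (A ⧸ I)]; rfl
  have halgm : ∀ c : ℂ, algebraMap ℂ (A ⧸ m) c = Ideal.Quotient.mk m (algebraMap ℂ A c) := by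
    intro c; rw [IsScalarTower.algebraMap_apply ℂ A (A ⧸ m)]; rfl
  -- factor map as linear map
  have hfs : Function.Surjective (Ideal.Quotient.factor hIm) := by
    intro x
    obtain ⟨a, rfl⟩ := Ideal.Quotient.mk_surjective (I := m) x
    exact ⟨Ideal.Quotient.mk I a, Ideal.Quotient.factor_mk _ _⟩
  haveI : Module.Finite ℂ (A ⧸ m) := by
    refine Module.Finite.of_surjective (M := A ⧸ I) (σ := RingHom.id ℂ)
      { toFun := Ideal.Quotient.factor hIm,
        map_add' := map_add _,
        map_smul' := ?_ } hfs
    intro c x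
    obtain ⟨a, rfl⟩ := Ideal.Quotient.mk_surjective (I := I) x
    simp only [RingHom.id_apply, Algebra.smul_def, map_mul, halg, halgm,
      Ideal.Quotient.factor_mk]
  haveI : Algebra.IsIntegral ℂ (A ⧸ m) := Algebra.IsIntegral.of_finite ℂ _
  have hsurj : Function.Surjective (algebraMap ℂ (A ⧸ m)) :=
    IsAlgClosed.algebraMap_bijective_of_isIntegral.2
  have hinj : Function.Injective (algebraMap ℂ (A ⧸ m)) := (algebraMap ℂ (A ⧸ m)).injective
  set e : ℂ ≃+* (A ⧸ m) := RingEquiv.ofBijective (algebraMap ℂ (A ⧸ m)) ⟨hinj, hsurj⟩ with he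
  set τ : A →+* ℂ := e.symm.toRingHom.comp (Ideal.Quotient.mk m) with hτ
  have hτalg : ∀ c : ℂ, τ (algebraMap ℂ A c) = c := by
    intro c
    have : Ideal.Quotient.mk m (algebraMap ℂ A c) = e c := (halgm c).symm
    simp [hτ, this]
  have hτker : ∀ a : A, τ a = 0 ↔ a ∈ m := by
    intro a
    rw [hτ]
    simp only [RingHom.coe_comp, Function.comp_apply, RingEquiv.toRingHom_eq_coe,
      RingEquiv.coe_toRingHom]
    constructor
    · intro h
      have : Ideal.Quotient.mk m a = e 0 := by
        apply e.symm.injective; simpa using h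
      rw [map_zero] at this
      exact (Ideal.Quotient.eq_zero_iff_mem).1 this
    · intro h
      rw [(Ideal.Quotient.eq_zero_iff_mem).2 h, map_zero]
  have hτsub : ∀ a : A, a - algebraMap ℂ A (τ a) ∈ m := by
    intro a
    rw [← hτker]
    simp [hτalg]

  -- ===== t-structure =====
  set π : A →+* (A ⧸ I) := Ideal.Quotient.mk I with hπ
  have hπsurj : Function.Surjective π := Ideal.Quotient.mk_surjective
  set W : Submodule ℂ (A ⧸ I) := Submodule.restrictScalars ℂ (Ideal.map π m) with hW
  have hmemW : ∀ a ∈ m, π a ∈ W := fun a ha => Ideal.mem_map_of_mem π ha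
  have hWmem : ∀ w ∈ W, ∃ a ∈ m, π a = w := by
    intro w hw
    exact (Ideal.mem_map_iff_of_surjective π hπsurj).1 hw
  have hQnt : Nontrivial (A ⧸ I) := by
    refine nontrivial_of_ne 0 1 fun h => ?_
    haveI : Subsingleton (A ⧸ I) := subsingleton_of_zero_eq_one h
    have h0 : Module.finrank ℂ (A ⧸ I) = 0 := Module.finrank_zero_of_subsingleton
    rw [h2] at h0
    omega
  have h1W : (1 : A ⧸ I) ∉ W := by
    intro h
    obtain ⟨a, ha, hpa⟩ := hWmem 1 h
    have : (1 : A) - a ∈ I := by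
      have : π (1 - a) = 0 := by rw [map_sub, hpa, map_one, sub_self]
      exact (Ideal.Quotient.eq_zero_iff_mem).1 this
    have h1m : (1 : A) ∈ m := by
      have := hIm this
      have := Submodule.add_mem m this ha
      simpa using this
    exact hmmax.ne_top (Ideal.eq_top_of_isUnit_mem m h1m isUnit_one)
  -- every element of A ⧸ I is constant + W
  have hdecQ : ∀ q : A ⧸ I, ∃ c : ℂ, q - algebraMap ℂ (A ⧸ I) c ∈ W := by
    intro q
    obtain ⟨a, rfl⟩ := hπsurj q
    refine ⟨τ a, ?_⟩
    have : π a - algebraMap ℂ (A ⧸ I) (τ a) = π (a - algebraMap ℂ A (τ a)) := by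
      rw [map_sub, halg]
    rw [this]
    exact hmemW _ (hτsub a)
  -- dimension count : finrank W = 1
  have hVone : Submodule.span ℂ {(1 : A ⧸ I)} ⊔ W = ⊤ := by
    rw [eq_top_iff]
    intro q _
    obtain ⟨c, hc⟩ := hdecQ q
    have : q = c • (1 : A ⧸ I) + (q - algebraMap ℂ (A ⧸ I) c) := by
      rw [Algebra.smul_def, mul_one]; ring
    rw [this]
    exact Submodule.add_mem _
      (Submodule.mem_sup_left (Submodule.smul_mem _ _ (Submodule.mem_span_singleton_self _)))
      (Submodule.mem_sup_right hc)
  have hWinf : Submodule.span ℂ {(1 : A ⧸ I)} ⊓ W = ⊥ := by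
    rw [eq_bot_iff]
    rintro q ⟨hq1, hqW⟩
    obtain ⟨c, hc⟩ := Submodule.mem_span_singleton.1 hq1
    rcases eq_or_ne c 0 with rfl | hcne
    · simpa using hc.symm
    · exfalso
      apply h1W
      have : (1 : A ⧸ I) = c⁻¹ • q := by rw [← hc, smul_smul, inv_mul_cancel₀ hcne, one_smul]
      rw [this]
      exact Submodule.smul_mem _ _ hqW
  have hfr1 : Module.finrank ℂ (Submodule.span ℂ {(1 : A ⧸ I)}) = 1 :=
    finrank_span_singleton one_ne_zero
  have hfrW : Module.finrank ℂ W = 1 := by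
    have := Submodule.finrank_sup_add_finrank_inf_eq (Submodule.span ℂ {(1 : A ⧸ I)}) W
    rw [hVone, hWinf, hfr1, finrank_top] at this
    rw [show Module.finrank ℂ (⊥ : Submodule ℂ (A ⧸ I)) = 0 from finrank_bot ℂ _] at this
    rw [h2] at this
    omega
  -- pick t
  have hWne : W ≠ ⊥ := by
    intro h
    rw [h] at hfrW
    simp at hfrW
  obtain ⟨tb, htbW, htbne⟩ := Submodule.exists_mem_ne_zero_of_ne_bot hWne
  obtain ⟨t, htm, hπt⟩ := hWmem tb htbW
  have htI : t ∉ I := by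
    intro h
    exact htbne (by rw [← hπt]; exact (Ideal.Quotient.eq_zero_iff_mem).2 h)
  have hWspan : W = Submodule.span ℂ {tb} := by
    refine (Submodule.eq_of_le_of_finrank_le ?_ ?_).symm
    · rw [Submodule.span_le, Set.singleton_subset_iff]; exact htbW
    · rw [hfrW, finrank_span_singleton htbne]
  -- decomposition of m elements
  have hdecm : ∀ a ∈ m, ∃ c : ℂ, a - algebraMap ℂ A c * t ∈ I := by
    intro a ha
    have : π a ∈ W := hmemW a ha
    rw [hWspan] at this
    obtain ⟨c, hc⟩ := Submodule.mem_span_singleton.1 this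
    refine ⟨c, ?_⟩
    rw [← Ideal.Quotient.eq_zero_iff_mem]
    show π _ = 0
    rw [map_sub, map_mul, ← halg, hπt, ← Algebra.smul_def, hc, sub_self]
  -- t² is zero in the quotient
  have htb2 : tb * tb = 0 := by
    by_contra hne
    have htbsq : tb * tb ∈ W := by
      obtain ⟨a, ha, hpa⟩ := hWmem tb htbW
      have : tb * tb = π (a * a) := by rw [map_mul, hpa]
      rw [this]
      exact hmemW _ (Ideal.mul_mem_right _ _ ha)
    rw [hWspan] at htbsq
    obtain ⟨c, hc⟩ := Submodule.mem_span_singleton.1 htbsq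
    have hcne : c ≠ 0 := by rintro rfl; rw [zero_smul] at hc; exact hne hc.symm
    -- t - c is a unit in A
    have hu : IsUnit (t - algebraMap ℂ A c) := by
      by_contra hnu
      have : t - algebraMap ℂ A c ∈ m := (IsLocalRing.mem_maximalIdeal _).2 hnu
      have : τ (t - algebraMap ℂ A c) = 0 := (hτker _).2 this
      rw [map_sub, hτalg, (hτker t).2 htm, zero_sub, neg_eq_zero] at this
      exact hcne this
    obtain ⟨u, hu⟩ := hu
    have hz : tb * π (t - algebraMap ℂ A c) = 0 := by
      have : tb * π (t - algebraMap ℂ A c) = tb * tb - c • tb := by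
        rw [map_sub, hπt, ← halg, mul_sub, Algebra.smul_def]
        ring
      rw [this, ← hc, sub_self]
    have h1 : π ((u : A)) * π ((↑u⁻¹ : Aˣ) : A) = 1 := by
      rw [← map_mul, u.mul_inv, map_one]
    have : tb = 0 := by
      have : tb = tb * (π ((u : A)) * π ((↑u⁻¹ : Aˣ) : A)) := by rw [h1, mul_one]
      rw [this, ← mul_assoc, hu, hz, zero_mul]
    exact htbne this
  have hmmI : ∀ a ∈ m, ∀ b ∈ m, a * b ∈ I := by
    intro a ha b hb
    obtain ⟨ca, hca⟩ := hdecm a ha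
    obtain ⟨cb, hcb⟩ := hdecm b hb
    have : a * b - (algebraMap ℂ A ca * t) * (algebraMap ℂ A cb * t) ∈ I := by
      have h1 : a * b - (algebraMap ℂ A ca * t) * b = (a - algebraMap ℂ A ca * t) * b := by ring
      have h2' : (algebraMap ℂ A ca * t) * b - (algebraMap ℂ A ca * t) * (algebraMap ℂ A cb * t)
          = (algebraMap ℂ A ca * t) * (b - algebraMap ℂ A cb * t) := by ring
      have := Ideal.add_mem I (h1 ▸ Ideal.mul_mem_right b I hca)
        (h2' ▸ Ideal.mul_mem_left I _ hcb)
      simpa using this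
    have ht2 : t * t ∈ I := by
      rw [← Ideal.Quotient.eq_zero_iff_mem]
      show π (t * t) = 0
      rw [map_mul, hπt, htb2]
    have : (algebraMap ℂ A ca * t) * (algebraMap ℂ A cb * t) ∈ I := by
      have : (algebraMap ℂ A ca * t) * (algebraMap ℂ A cb * t)
          = (algebraMap ℂ A ca * algebraMap ℂ A cb) * (t * t) := by ring
      rw [this]
      exact Ideal.mul_mem_left I _ ht2
    have h4 := Ideal.add_mem I ‹a * b - _ ∈ I› this
    simpa using h4

  -- ===== generators =====
  obtain ⟨sB, hsBcard, hsBspan⟩ := hregB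
  obtain ⟨sA, hsAcard, hsAspan⟩ := hregA
  set y : Fin n → B := fun i => ((Finset.equivFinOfCardEq hsBcard).symm i : B) with hy
  set x : Fin n → A := fun i => ((Finset.equivFinOfCardEq hsAcard).symm i : A) with hx
  have hyrange : Set.range y = ↑sB := by
    ext b
    constructor
    · rintro ⟨i, rfl⟩; exact ((Finset.equivFinOfCardEq hsBcard).symm i).2
    · intro hb
      exact ⟨(Finset.equivFinOfCardEq hsBcard) ⟨b, hb⟩, by simp [hy]⟩
  have hxrange : Set.range x = ↑sA := by
    ext a
    constructor
    · rintro ⟨i, rfl⟩; exact ((Finset.equivFinOfCardEq hsAcard).symm i).2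
    · intro ha
      exact ⟨(Finset.equivFinOfCardEq hsAcard) ⟨a, ha⟩, by simp [hx]⟩
  have hspany : Ideal.span (Set.range y) = maximalIdeal B := by rw [hyrange, hsBspan]
  have hspanx : Ideal.span (Set.range x) = m := by rw [hxrange, hsAspan, hm]
  set yb : Fin n → A := fun k => algebraMap B A (y k) with hyb
  have hIyspan : I = Ideal.span (Set.range yb) := by
    rw [hI, ← hspany, Ideal.map_span]
    congr 1
    rw [← Set.range_comp]
    rfl
  have hybI : ∀ k, yb k ∈ I := by
    intro k
    rw [hIyspan]
    exact Ideal.subset_span ⟨k, rfl⟩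
  have hxm : ∀ j, x j ∈ m := by
    intro j
    rw [← hspanx]
    exact Ideal.subset_span ⟨j, rfl⟩
  have hImem : ∀ z ∈ I, ∃ g : Fin n → A, ∑ k, g k * yb k = z := by
    intro z hz
    rw [hIyspan] at hz
    obtain ⟨c, hc⟩ := (Submodule.mem_span_range_iff_exists_fun A).1 hz
    exact ⟨c, by simpa [smul_eq_mul] using hc⟩
  have hmmem : ∀ a ∈ m, ∃ g : Fin n → A, ∑ j, g j * x j = a := by
    intro a ha
    rw [← hspanx] at ha
    obtain ⟨c, hc⟩ := (Submodule.mem_span_range_iff_exists_fun A).1 ha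
    exact ⟨c, by simpa [smul_eq_mul] using hc⟩
  -- ===== the derivation into ℂ^n =====
  set dd := KaehlerDifferential.D ℂ A with hdd
  set Df : A → (Fin n → ℂ) := fun a i => τ (bA.repr (dd a) i) with hDf
  have hrepr_mul : ∀ (a b : A) (i : Fin n),
      bA.repr (dd (a * b)) i = a * bA.repr (dd b) i + b * bA.repr (dd a) i := by
    intro a b i
    rw [Derivation.leibniz]
    simp [smul_eq_mul]
  have hDf_mul : ∀ (a b : A) (i : Fin n), Df (a * b) i = τ a * Df b i + τ b * Df a i := by
    intro a b i
    simp [hDf, hrepr_mul, map_add, map_mul]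
  have hDf_add : ∀ (a b : A) (i : Fin n), Df (a + b) i = Df a i + Df b i := by
    intro a b i; simp [hDf, map_add]
  have hDf_sub : ∀ (a b : A) (i : Fin n), Df (a - b) i = Df a i - Df b i := by
    intro a b i; simp [hDf, map_sub]
  have hDf_alg : ∀ (c : ℂ) (i : Fin n), Df (algebraMap ℂ A c) i = 0 := by
    intro c i
    simp [hDf, Derivation.map_algebraMap]
  have hDf_sum : ∀ (N : ℕ) (f : Fin N → A) (i : Fin n),
      Df (∑ j, f j) i = ∑ j, Df (f j) i := by
    intro N f i
    simp [hDf, map_sum, Finsupp.finset_sum_apply]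
  -- Df of a multiple of an m-element
  have hDf_mulm : ∀ (g a : A), a ∈ m → ∀ i, Df (g * a) i = τ g * Df a i := by
    intro g a ha i
    rw [hDf_mul, (hτker a).2 ha, zero_mul, add_zero]
  -- span of the Df (x j)
  have hDxm : ∀ a ∈ m, Df a ∈ Submodule.span ℂ (Set.range fun j => Df (x j)) := by
    intro a ha
    obtain ⟨g, hg⟩ := hmmem a ha
    have : Df a = ∑ j, τ (g j) • Df (x j) := by
      funext i
      rw [← hg, hDf_sum]
      simp only [Finset.sum_apply, Pi.smul_apply, smul_eq_mul]
      exact Finset.sum_congr rfl fun j _ => hDf_mulm (g j) (x j) (hxm j) i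
    rw [this]
    exact Submodule.sum_mem _ fun j _ =>
      Submodule.smul_mem _ _ (Submodule.subset_span ⟨j, rfl⟩)
  have hDA : ∀ a : A, Df a ∈ Submodule.span ℂ (Set.range fun j => Df (x j)) := by
    intro a
    have h1 : Df a = Df (a - algebraMap ℂ A (τ a)) := by
      funext i
      rw [hDf_sub, hDf_alg, sub_zero]
    rw [h1]
    exact hDxm _ (hτsub a)
  have hDspan : ⊤ ≤ Submodule.span ℂ (Set.range fun j => Df (x j)) := by
    -- first, the standard basis vectors are in the span
    have hsingle : ∀ i₀ : Fin n,
        (fun i => if i₀ = i then (1:ℂ) else 0) ∈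
          Submodule.span ℂ (Set.range fun j => Df (x j)) := by
      intro i₀
      have hb : (bA i₀ : Ω[A⁄ℂ]) ∈ Submodule.span A (Set.range dd) := by
        rw [hdd, KaehlerDifferential.span_range_derivation]; trivial
      obtain ⟨N, f, g, hfg⟩ := Submodule.mem_span_set'.1 hb
      choose b hbeq using fun j => (g j).2
      have key : (fun i => if i₀ = i then (1:ℂ) else 0) = ∑ j, τ (f j) • Df (b j) := by
        funext i
        have h1 : bA.repr (bA i₀) i = ∑ j, f j * bA.repr (dd (b j)) i := by
          rw [← hfg]
          simp only [map_sum, Finsupp.finset_sum_apply]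
          refine Finset.sum_congr rfl fun j _ => ?_
          rw [hbeq j]
          simp [smul_eq_mul]
        have h2 : τ (bA.repr (bA i₀) i) = if i₀ = i then (1:ℂ) else 0 := by
          rw [Module.Basis.repr_self_apply]
          split <;> simp
        rw [← h2, h1, map_sum]
        simp only [Finset.sum_apply, Pi.smul_apply, smul_eq_mul, map_mul]
        rfl
      rw [key]
      exact Submodule.sum_mem _ fun j _ => Submodule.smul_mem _ _ (hDA (b j))
    intro v _
    have : v = ∑ i, v i • (fun k => if i = k then (1:ℂ) else 0) := by
      funext k
      simp only [Finset.sum_apply, Pi.smul_apply, smul_eq_mul, mul_ite, mul_one, mul_zero]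
      simp
    rw [this]
    exact Submodule.sum_mem _ fun i _ => Submodule.smul_mem _ _ (hsingle i)
  have hind : LinearIndependent ℂ (fun j => Df (x j)) := by
    refine linearIndependent_of_top_le_span_of_card_eq_finrank hDspan ?_
    simp [Module.finrank_pi]
  have hkey : ∀ a ∈ m, Df a = 0 → a ∈ I := by
    intro a ha hDa
    obtain ⟨g, hg⟩ := hmmem a ha
    have hrel : ∑ j, τ (g j) • Df (x j) = 0 := by
      rw [← hDa]
      funext i
      rw [← hg, hDf_sum]
      simp only [Finset.sum_apply, Pi.smul_apply, smul_eq_mul]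
      exact (Finset.sum_congr rfl fun j _ => (hDf_mulm (g j) (x j) (hxm j) i).symm)
    have hg0 : ∀ j, τ (g j) = 0 := by
      have := Fintype.linearIndependent_iff.1 hind (fun j => τ (g j)) hrel
      exact this
    rw [← hg]
    exact Ideal.sum_mem _ fun j _ => hmmI (g j) ((hτker _).1 (hg0 j)) (x j) (hxm j)

  -- ===== the matrix and its reduction =====
  set NM : Matrix (Fin n) (Fin n) A := Matrix.of fun i k => bA.repr (dd (yb k)) i with hNM
  set N0 : Matrix (Fin n) (Fin n) ℂ := τ.mapMatrix NM with hN0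
  have hN0app : ∀ i k, N0 i k = Df (yb k) i := by
    intro i k
    simp [hN0, hNM, hDf, RingHom.mapMatrix_apply, Matrix.map_apply]
  set V : Submodule ℂ (Fin n → ℂ) := Submodule.span ℂ (Set.range fun k => Df (yb k)) with hV
  have hybm : ∀ k, yb k ∈ m := fun k => hIm (hybI k)
  have hDI : ∀ z ∈ I, Df z ∈ V := by
    intro z hz
    obtain ⟨g, hg⟩ := hImem z hz
    have : Df z = ∑ k, τ (g k) • Df (yb k) := by
      funext i
      rw [← hg, hDf_sum]
      simp only [Finset.sum_apply, Pi.smul_apply, smul_eq_mul]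
      exact Finset.sum_congr rfl fun k _ => hDf_mulm (g k) (yb k) (hybm k) i
    rw [this]
    exact Submodule.sum_mem _ fun k _ =>
      Submodule.smul_mem _ _ (Submodule.subset_span ⟨k, rfl⟩)
  have hDtV : Df t ∉ V := by
    intro hmem
    obtain ⟨c, hc⟩ := (Submodule.mem_span_range_iff_exists_fun ℂ).1 hmem
    set a : A := t - ∑ k, algebraMap ℂ A (c k) * yb k with ha
    have haI : a ∈ I := by
      refine hkey a ?_ ?_
      · refine Submodule.sub_mem m htm (Ideal.sum_mem _ fun k _ => ?_)
        exact hIm (Ideal.mul_mem_left I _ (hybI k))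
      · funext i
        rw [ha, hDf_sub, hDf_sum]
        have : ∀ k, Df (algebraMap ℂ A (c k) * yb k) i = c k * Df (yb k) i := by
          intro k
          rw [hDf_mul, hτalg, (hτker _).2 (hybm k), zero_mul, add_zero]
        simp only [this]
        have := congrFun hc i
        simp only [Finset.sum_apply, Pi.smul_apply, smul_eq_mul] at this
        simp [this]
    apply htI
    have : t = a + ∑ k, algebraMap ℂ A (c k) * yb k := by rw [ha]; ring
    rw [this]
    exact Ideal.add_mem _ haI (Ideal.sum_mem _ fun k _ => Ideal.mul_mem_left I _ (hybI k))
  -- det NM ∈ m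
  have hdetN0 : N0.det = 0 := by
    by_contra hne
    have hUnit : IsUnit N0.det := isUnit_iff_ne_zero.2 hne
    have hsurjmv : Function.Surjective N0.mulVec := by
      intro v
      refine ⟨N0⁻¹.mulVec v, ?_⟩
      rw [Matrix.mulVec_mulVec, Matrix.mul_nonsing_inv _ hUnit, Matrix.one_mulVec]
    have htop : Submodule.span ℂ (Set.range N0.transpose) = ⊤ := by
      rw [show Set.range N0.transpose = Set.range N0.col from rfl, ← Matrix.range_mulVecLin]
      exact LinearMap.range_eq_top.2 hsurjmv
    have hsets : (Set.range fun k => Df (yb k)) = Set.range N0.transpose := by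
      ext v
      constructor
      · rintro ⟨k, rfl⟩
        exact ⟨k, (funext fun i => by rw [Matrix.transpose_apply, hN0app]).symm⟩
      · rintro ⟨k, rfl⟩
        exact ⟨k, funext fun i => by rw [Matrix.transpose_apply, hN0app]⟩
    have hVT : V = ⊤ := by rw [hV, hsets, htop]
    exact hDtV (hVT ▸ Submodule.mem_top)
  have hdetNMm : NM.det ∈ m := by
    rw [← hτker]
    rw [RingHom.map_det]
    exact hN0 ▸ hdetN0

  -- ===== column lemmas =====
  have hCol : ∀ z ∈ I, ∃ g : Fin n → A,
      ∀ i, bA.repr (dd z) i - ∑ k, g k * NM i k ∈ I := by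
    intro z hz
    obtain ⟨g, hg⟩ := hImem z hz
    refine ⟨g, fun i => ?_⟩
    have hexp : bA.repr (dd z) i
        = ∑ k, (g k * NM i k + yb k * bA.repr (dd (g k)) i) := by
      rw [← hg, map_sum, map_sum, Finsupp.finset_sum_apply]
      refine Finset.sum_congr rfl fun k _ => ?_
      rw [hrepr_mul]
      rfl
    rw [hexp, Finset.sum_add_distrib, add_sub_cancel_left]
    exact Ideal.sum_mem _ fun k _ => Ideal.mul_mem_right _ I (hybI k)
  have htt : t * t ∈ I := hmmI t htm t htm
  have h2A : (2 : A) = algebraMap ℂ A 2 := (map_ofNat (algebraMap ℂ A) 2).symm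
  have h12 : algebraMap ℂ A (1/2) * 2 = 1 := by
    rw [h2A, ← map_mul]
    norm_num
  have hColt2 : ∃ g : Fin n → A,
      ∀ i, t * bA.repr (dd t) i - ∑ k, g k * NM i k ∈ I := by
    obtain ⟨g, hg⟩ := hCol (t * t) htt
    refine ⟨fun k => algebraMap ℂ A (1/2) * g k, fun i => ?_⟩
    have hrep : bA.repr (dd (t * t)) i = t * bA.repr (dd t) i + t * bA.repr (dd t) i :=
      hrepr_mul t t i
    have heq : t * bA.repr (dd t) i - ∑ k, (algebraMap ℂ A (1/2) * g k) * NM i k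
        = algebraMap ℂ A (1/2) * (bA.repr (dd (t * t)) i - ∑ k, g k * NM i k) := by
      rw [hrep, mul_sub, Finset.mul_sum, ← two_mul, ← mul_assoc, ← mul_assoc,
        mul_comm (algebraMap ℂ A (1/2)) (2 : A)]
      rw [mul_comm (2:A) (algebraMap ℂ A (1/2)), h12, one_mul]
      congr 1
      exact Finset.sum_congr rfl fun k _ => (mul_assoc _ _ _)
    rw [heq]
    exact Ideal.mul_mem_left I _ (hg i)
  obtain ⟨g0, hg0⟩ := hColt2
  have hColm : ∀ a ∈ m, ∃ g : Fin n → A,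
      ∀ i, t * bA.repr (dd a) i - ∑ k, g k * NM i k ∈ I := by
    intro a ha
    obtain ⟨g1, hg1⟩ := hCol (t * a) (hmmI t htm a ha)
    obtain ⟨c, hc⟩ := hdecm a ha
    refine ⟨fun k => g1 k - algebraMap ℂ A c * g0 k, fun i => ?_⟩
    have hrep : bA.repr (dd (t * a)) i = t * bA.repr (dd a) i + a * bA.repr (dd t) i :=
      hrepr_mul t a i
    have hsum : ∑ k, (g1 k - algebraMap ℂ A c * g0 k) * NM i k
        = (∑ k, g1 k * NM i k) - algebraMap ℂ A c * ∑ k, g0 k * NM i k := by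
      rw [Finset.mul_sum, ← Finset.sum_sub_distrib]
      exact Finset.sum_congr rfl fun k _ => by ring
    have heq : t * bA.repr (dd a) i - ∑ k, (g1 k - algebraMap ℂ A c * g0 k) * NM i k
        = (bA.repr (dd (t * a)) i - ∑ k, g1 k * NM i k)
          - (a - algebraMap ℂ A c * t) * bA.repr (dd t) i
          - algebraMap ℂ A c * (t * bA.repr (dd t) i - ∑ k, g0 k * NM i k) := by
      rw [hrep, hsum]
      ring
    rw [heq]
    exact Ideal.sub_mem _
      (Ideal.sub_mem _ (hg1 i) (Ideal.mul_mem_right _ I hc))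
      (Ideal.mul_mem_left I _ (hg0 i))
  have hColA : ∀ a : A, ∃ g : Fin n → A,
      ∀ i, t * bA.repr (dd a) i - ∑ k, g k * NM i k ∈ I := by
    intro a
    have hda : dd a = dd (a - algebraMap ℂ A (τ a)) := by
      rw [map_sub, Derivation.map_algebraMap, sub_zero]
    obtain ⟨g, hg⟩ := hColm _ (hτsub a)
    exact ⟨g, fun i => by rw [hda]; exact hg i⟩
  -- the quasi-inverse matrix
  have hQ' : ∃ QM : Matrix (Fin n) (Fin n) A,
      ∀ i j, t * (1 : Matrix (Fin n) (Fin n) A) i j - ∑ k, NM i k * QM k j ∈ I := by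
    have hcol : ∀ j : Fin n, ∃ q : Fin n → A,
        ∀ i, t * (1 : Matrix (Fin n) (Fin n) A) i j - ∑ k, NM i k * q k ∈ I := by
      intro j
      have hb : (bA j : Ω[A⁄ℂ]) ∈ Submodule.span A (Set.range dd) := by
        rw [hdd, KaehlerDifferential.span_range_derivation]; trivial
      obtain ⟨N, f, gg, hfg⟩ := Submodule.mem_span_set'.1 hb
      choose b hbeq using fun l => (gg l).2
      choose gj hgj using fun l => hColA (b l)
      refine ⟨fun k => ∑ l, f l * gj l k, fun i => ?_⟩
      have h1 : bA.repr (bA j) i = ∑ l, f l * bA.repr (dd (b l)) i := by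
        rw [← hfg, map_sum, Finsupp.finset_sum_apply]
        refine Finset.sum_congr rfl fun l _ => ?_
        rw [hbeq l]
        simp [smul_eq_mul]
      have h2 : (1 : Matrix (Fin n) (Fin n) A) i j = bA.repr (bA j) i := by
        rw [Matrix.one_apply, Module.Basis.repr_self_apply]
        by_cases h : i = j
        · simp [h]
        · rw [if_neg h, if_neg fun hji => h hji.symm]
      have hsum : ∑ k, NM i k * (∑ l, f l * gj l k)
          = ∑ l, f l * ∑ k, gj l k * NM i k := by
        simp only [Finset.mul_sum]
        rw [Finset.sum_comm]
        exact Finset.sum_congr rfl fun l _ => Finset.sum_congr rfl fun k _ => by ring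
      have heq : t * (1 : Matrix (Fin n) (Fin n) A) i j
            - ∑ k, NM i k * (∑ l, f l * gj l k)
          = ∑ l, f l * (t * bA.repr (dd (b l)) i - ∑ k, gj l k * NM i k) := by
        rw [h2, h1, Finset.mul_sum, hsum, ← Finset.sum_sub_distrib]
        exact Finset.sum_congr rfl fun l _ => by ring
      rw [heq]
      exact Ideal.sum_mem _ fun l _ => Ideal.mul_mem_left I _ (hgj l i)
    choose QM hQM using hcol
    exact ⟨Matrix.of fun k j => QM j k, fun i j => hQM j i⟩
  obtain ⟨QM, hQM⟩ := hQ'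

  -- ===== det NM ∉ I =====
  have hdetNI : NM.det ∉ I := by
    intro hdet
    -- t * adjugate entries lie in I
    have hadjI : ∀ i j, t * NM.adjugate i j ∈ I := by
      intro i j
      have hid : ∑ k, NM.adjugate i k * ∑ l, NM k l * QM l j
          = NM.det * QM i j := by
        have := congrFun (congrFun (Matrix.adjugate_mul NM) i) j
        have h1 : (NM.adjugate * (NM * QM)) i j = ((NM.adjugate * NM) * QM) i j := by
          rw [Matrix.mul_assoc]
        rw [Matrix.mul_apply] at h1
        simp only [Matrix.mul_apply] at h1 ⊢
        rw [h1]
        have h2 : ∀ k, (∑ l, NM.adjugate i l * NM l k) * QM k j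
            = (NM.det • (1 : Matrix (Fin n) (Fin n) A)) i k * QM k j := by
          intro k
          congr 1
          have := congrFun (congrFun (Matrix.adjugate_mul NM) i) k
          rw [Matrix.mul_apply] at this
          exact this
        calc ∑ k, (∑ l, NM.adjugate i l * NM l k) * QM k j
            = ∑ k, (NM.det • (1 : Matrix (Fin n) (Fin n) A)) i k * QM k j :=
              Finset.sum_congr rfl fun k _ => h2 k
          _ = NM.det * QM i j := by
              simp only [Matrix.smul_apply, Matrix.one_apply, smul_eq_mul, mul_ite,
                mul_one, mul_zero, ite_mul, zero_mul]
              simp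
      -- t * adj i j = det * QM i j - ∑ k, adj i k * (∑ l NM k l * QM l j - t * 1 k j)
      have hexp : t * NM.adjugate i j
          = NM.det * QM i j
            - ∑ k, NM.adjugate i k *
              ((∑ l, NM k l * QM l j) - t * (1 : Matrix (Fin n) (Fin n) A) k j) := by
        have hsplit : ∑ k, NM.adjugate i k *
              ((∑ l, NM k l * QM l j) - t * (1 : Matrix (Fin n) (Fin n) A) k j)
            = (∑ k, NM.adjugate i k * ∑ l, NM k l * QM l j)
              - ∑ k, NM.adjugate i k * (t * (1 : Matrix (Fin n) (Fin n) A) k j) := by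
          rw [← Finset.sum_sub_distrib]
          exact Finset.sum_congr rfl fun k _ => by ring
        have hone : ∑ k, NM.adjugate i k * (t * (1 : Matrix (Fin n) (Fin n) A) k j)
            = t * NM.adjugate i j := by
          simp only [Matrix.one_apply, mul_ite, mul_one, mul_zero]
          rw [Finset.sum_ite_eq' (Finset.univ : Finset (Fin n)) j
            (fun k => NM.adjugate i k * t)]
          simp [mul_comm]
        rw [hsplit, hone, hid]
        ring
      rw [hexp]
      refine Ideal.sub_mem _ (Ideal.mul_mem_right _ I hdet)
        (Ideal.sum_mem _ fun k _ => Ideal.mul_mem_left I _ ?_)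
      have := hQM k j
      have hneg : (∑ l, NM k l * QM l j) - t * (1 : Matrix (Fin n) (Fin n) A) k j
          = -(t * (1 : Matrix (Fin n) (Fin n) A) k j - ∑ l, NM k l * QM l j) := by ring
      rw [hneg]
      exact neg_mem this
    -- hence all adjugate entries are in m
    have hadjm : ∀ i j, NM.adjugate i j ∈ m := by
      intro i j
      by_contra hnm
      have hu : IsUnit (NM.adjugate i j) := by
        by_contra hnu
        exact hnm ((IsLocalRing.mem_maximalIdeal _).2 hnu)
      obtain ⟨u, hu⟩ := hu
      apply htI
      have : t = (t * NM.adjugate i j) * ((↑u⁻¹ : Aˣ) : A) := by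
        rw [← hu, mul_assoc, u.mul_inv, mul_one]
      rw [this]
      exact Ideal.mul_mem_right _ I (hadjI i j)
    -- so adjugate N0 = 0
    have hadj0 : N0.adjugate = 0 := by
      have hmap : τ.mapMatrix NM.adjugate = N0.adjugate := by
        rw [RingHom.map_adjugate, hN0]
      rw [← hmap]
      ext i j
      simp only [RingHom.mapMatrix_apply, Matrix.map_apply, Matrix.zero_apply]
      exact (hτker _).2 (hadjm i j)
    -- final contradiction via updateColumn
    have hVlt : V < ⊤ := lt_of_le_of_ne le_top fun h => hDtV (h ▸ Submodule.mem_top)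
    have hfrV : Module.finrank ℂ V < n := by
      have := Submodule.finrank_lt hVlt.ne
      rwa [Module.finrank_pi, Fintype.card_fin] at this
    have hnotind : ¬ LinearIndependent ℂ (fun k => Df (yb k)) := by
      intro h
      have := finrank_span_eq_card h
      rw [← hV, Fintype.card_fin] at this
      omega
    obtain ⟨c, hcrel, j₀, hcj⟩ := Fintype.not_linearIndependent_iff.1 hnotind
    set M' : Matrix (Fin n) (Fin n) ℂ := N0.updateCol j₀ (Df t) with hM'
    have hM'col : ∀ k, M'.transpose k = if k = j₀ then Df t else Df (yb k) := by
      intro k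
      funext i
      rw [Matrix.transpose_apply, hM', Matrix.updateCol_apply]
      by_cases h : k = j₀ <;> simp [h, hN0app]
    have hybmem : ∀ k, Df (yb k) ∈ Submodule.span ℂ (Set.range M'.transpose) := by
      intro k
      by_cases hk : k = j₀
      · subst hk
        have hrel0 : (∑ l ∈ Finset.univ.erase k, c l • Df (yb l)) + c k • Df (yb k) = 0 := by
          rw [Finset.sum_erase_add Finset.univ _ (Finset.mem_univ k)]
          exact hcrel
        have hrel : c k • Df (yb k) = -∑ l ∈ Finset.univ.erase k, c l • Df (yb l) := by
          rw [eq_neg_iff_add_eq_zero, add_comm]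
          exact hrel0
        have h1 : Df (yb k) = (c k)⁻¹ • (c k • Df (yb k)) := by
          rw [smul_smul, inv_mul_cancel₀ hcj, one_smul]
        rw [h1, hrel]
        refine Submodule.smul_mem _ _ (Submodule.neg_mem _ (Submodule.sum_mem _ fun l hl => ?_))
        have hlk : l ≠ k := (Finset.mem_erase.1 hl).1
        refine Submodule.smul_mem _ _ (Submodule.subset_span ⟨l, ?_⟩)
        rw [hM'col l, if_neg hlk]
      · exact Submodule.subset_span ⟨k, by rw [hM'col k, if_neg hk]⟩
    have hVle : V ≤ Submodule.span ℂ (Set.range M'.transpose) := by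
      rw [hV, Submodule.span_le]
      rintro v ⟨k, rfl⟩
      exact hybmem k
    have htmem : Df t ∈ Submodule.span ℂ (Set.range M'.transpose) :=
      Submodule.subset_span ⟨j₀, by rw [hM'col j₀, if_pos rfl]⟩
    have hspanM' : ⊤ ≤ Submodule.span ℂ (Set.range M'.transpose) := by
      have hsub : ∀ j, Df (x j) ∈ Submodule.span ℂ (Set.range M'.transpose) := by
        intro j
        obtain ⟨cj, hcj'⟩ := hdecm (x j) (hxm j)
        have hXj : Df (x j) = Df (x j - algebraMap ℂ A cj * t) + cj • Df t := by
          funext i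
          simp only [Pi.add_apply, Pi.smul_apply, smul_eq_mul]
          rw [hDf_sub]
          have : Df (algebraMap ℂ A cj * t) i = cj * Df t i := by
            rw [hDf_mul, hτalg, (hτker t).2 htm, zero_mul, add_zero]
          rw [this]
          ring
        rw [hXj]
        exact Submodule.add_mem _ (hVle (hDI _ hcj')) (Submodule.smul_mem _ _ htmem)
      calc (⊤ : Submodule ℂ (Fin n → ℂ))
          ≤ Submodule.span ℂ (Set.range fun j => Df (x j)) := hDspan
        _ ≤ Submodule.span ℂ (Set.range M'.transpose) := by
            rw [Submodule.span_le]; rintro v ⟨j, rfl⟩; exact hsub j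
    -- M' has nonzero determinant
    have hM'li : LinearIndependent ℂ (fun k => M'.transpose k) :=
      linearIndependent_of_top_le_span_of_card_eq_finrank hspanM'
        (by simp [Module.finrank_pi])
    have hM'det : M'.det ≠ 0 :=
      ((Matrix.isUnit_iff_isUnit_det M').1
        ((Matrix.linearIndependent_cols_iff_isUnit (A := M')).1 hM'li)).ne_zero
    -- but cramer gives zero
    apply hM'det
    have : M'.det = N0.cramer (Df t) j₀ := (Matrix.cramer_apply N0 (Df t) j₀).symm
    rw [this, Matrix.cramer_eq_adjugate_mulVec, hadj0]
    simp [Matrix.zero_mulVec]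

  -- ===== B side =====
  set dB := KaehlerDifferential.D ℂ B with hdB
  have hmBres : ∀ b : B, ∃ c : ℂ, b - algebraMap ℂ B c ∈ maximalIdeal B := by
    intro b
    set K : Ideal B := RingHom.ker (τ.comp (algebraMap B A)) with hK
    have hle : maximalIdeal B ≤ K := by
      intro b' hb'
      have h1 : algebraMap B A b' ∈ I := Ideal.mem_map_of_mem _ hb'
      show τ (algebraMap B A b') = 0
      exact (hτker _).2 (hIm h1)
    have hKne : K ≠ ⊤ := by
      intro h
      have h1 : (1 : B) ∈ K := h ▸ Submodule.mem_top
      have : τ (algebraMap B A 1) = 0 := h1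
      rw [map_one, map_one] at this
      exact one_ne_zero this
    have hKeq : maximalIdeal B = K := (IsLocalRing.maximalIdeal.isMaximal B).eq_of_le hKne hle
    refine ⟨τ (algebraMap B A b), ?_⟩
    rw [hKeq]
    show τ (algebraMap B A (b - algebraMap ℂ B (τ (algebraMap B A b)))) = 0
    rw [map_sub, map_sub, ← IsScalarTower.algebraMap_apply ℂ B A, hτalg, sub_self]
  haveI : Module.Finite B (Ω[B⁄ℂ]) := Module.Finite.of_basis bB
  set SY : Submodule B (Ω[B⁄ℂ]) := Submodule.span B (Set.range fun k => dB (y k)) with hSY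
  have hsup : (⊤ : Submodule B (Ω[B⁄ℂ])) ≤
      SY ⊔ (maximalIdeal B) • (⊤ : Submodule B (Ω[B⁄ℂ])) := by
    have h1 : Submodule.span B (Set.range dB) = ⊤ :=
      KaehlerDifferential.span_range_derivation ℂ B
    intro ω _
    have hω : ω ∈ Submodule.span B (Set.range dB) := by rw [h1]; trivial
    refine Submodule.span_le.2 ?_ hω
    rintro _ ⟨b, rfl⟩
    obtain ⟨c, hc⟩ := hmBres b
    have hdb : dB b = dB (b - algebraMap ℂ B c) := by
      rw [map_sub, Derivation.map_algebraMap, sub_zero]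
    have hb' : b - algebraMap ℂ B c ∈ Ideal.span (Set.range y) := hspany ▸ hc
    obtain ⟨g, hg⟩ := (Submodule.mem_span_range_iff_exists_fun B).1 hb'
    have hexp : dB (b - algebraMap ℂ B c) = ∑ k, (g k • dB (y k) + y k • dB (g k)) := by
      rw [← hg, map_sum]
      exact Finset.sum_congr rfl fun k _ => by
        rw [smul_eq_mul, Derivation.leibniz, add_comm]
    rw [hdb, hexp]
    refine Submodule.sum_mem _ fun k _ => Submodule.add_mem _ ?_ ?_
    · exact Submodule.mem_sup_left (Submodule.smul_mem _ _ (Submodule.subset_span ⟨k, rfl⟩))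
    · refine Submodule.mem_sup_right (Submodule.smul_mem_smul ?_ Submodule.mem_top)
      rw [← hspany]
      exact Ideal.subset_span ⟨k, rfl⟩
  have hSYtop : (⊤ : Submodule B (Ω[B⁄ℂ])) ≤ SY := by
    refine Submodule.le_of_le_smul_of_le_jacobson_bot (Module.finite_def.1 inferInstance) ?_ hsup
    rw [IsLocalRing.jacobson_eq_maximalIdeal ⊥ bot_ne_top]
  have hCcol : ∀ j, ∃ cj : Fin n → B, ∑ k, cj k • dB (y k) = bB j :=
    fun j => (Submodule.mem_span_range_iff_exists_fun B).1 (hSYtop Submodule.mem_top)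
  choose CM hCM using hCcol
  set CMm : Matrix (Fin n) (Fin n) B := Matrix.of fun k j => CM j k with hCMm
  set RM : Matrix (Fin n) (Fin n) B := Matrix.of fun l k => bB.repr (dB (y k)) l with hRM
  have hRC : RM * CMm = 1 := by
    ext l j
    rw [Matrix.mul_apply, Matrix.one_apply]
    have h1 : bB.repr (bB j) l = ∑ k, CM j k * bB.repr (dB (y k)) l := by
      rw [← hCM j, map_sum, Finsupp.finset_sum_apply]
      exact Finset.sum_congr rfl fun k _ => by rw [map_smul, Finsupp.smul_apply, smul_eq_mul]
    rw [Module.Basis.repr_self_apply] at h1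
    have h2 : ∑ k, RM l k * CMm k j = ∑ k, CM j k * bB.repr (dB (y k)) l := by
      exact Finset.sum_congr rfl fun k _ => by rw [hRM, hCMm]; simp [mul_comm]
    rw [h2, ← h1]
    by_cases h : l = j
    · simp [h]
    · rw [if_neg h, if_neg fun hji => h hji.symm]
  have hdetCunit : IsUnit CMm.det := by
    have h1 := congrArg Matrix.det hRC
    rw [Matrix.det_mul, Matrix.det_one] at h1
    exact IsUnit.of_mul_eq_one _ (by rw [mul_comm]; exact h1)
  -- the goal matrix factors
  set GM : Matrix (Fin n) (Fin n) A := Matrix.of fun i j : Fin n =>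
      bA.repr (KaehlerDifferential.map ℂ ℂ B A (bB j)) i with hGMdef
  have hGM : GM = NM * (algebraMap B A).mapMatrix CMm := by
    ext i j
    have h1 : KaehlerDifferential.map ℂ ℂ B A (bB j) = ∑ k, CM j k • dd (yb k) := by
      rw [← hCM j, map_sum]
      refine Finset.sum_congr rfl fun k _ => ?_
      rw [map_smul, hdB, KaehlerDifferential.map_D, hyb, hdd]
    rw [hGMdef, Matrix.mul_apply]
    show bA.repr (KaehlerDifferential.map ℂ ℂ B A (bB j)) i = _
    rw [h1, map_sum, Finsupp.finset_sum_apply]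
    refine Finset.sum_congr rfl fun k _ => ?_
    have h3 : CM j k • dd (yb k) = algebraMap B A (CM j k) • dd (yb k) :=
      (algebraMap_smul A _ _).symm
    rw [h3, map_smul, Finsupp.smul_apply, smul_eq_mul]
    rw [hNM, hCMm]
    simp only [RingHom.mapMatrix_apply, Matrix.map_apply, Matrix.of_apply]
    ring
  have hdetGM : GM.det = NM.det * algebraMap B A CMm.det := by
    rw [hGM, Matrix.det_mul, RingHom.map_det]
  have hm2I : m ^ 2 ≤ I := by
    rw [pow_two]
    exact Ideal.mul_le.2 fun r hr s hs => hmmI r hr s hs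
  constructor
  · show GM.det ∈ m
    rw [hdetGM]
    exact Ideal.mul_mem_right _ _ hdetNMm
  · show GM.det ∉ m ^ 2
    intro hsq
    apply hdetNI
    obtain ⟨u, hu⟩ := hdetCunit.map (algebraMap B A)
    have h3 : GM.det ∈ I := hm2I hsq
    rw [hdetGM, ← hu] at h3
    have h4 : NM.det = (NM.det * (u : A)) * ((↑u⁻¹ : Aˣ) : A) := by
      rw [mul_assoc, u.mul_inv, mul_one]
    rw [h4]
    exact Ideal.mul_mem_right _ I h3
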